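/- A pruned binary tree T admits a Σ-coloring if and only if T has a branch containing infinitely many 1s (equivalently, T ∉ F, where F is the set of pruned binary trees all of whose branches contain only finitely many 1s). -/

import Mathlib

/-- A set-theoretic binary tree: a nonempty subset of `List Bool`
closed under taking initial segments. -/
def IsSTTree (T : Set (List Bool)) : Prop :=
  T.Nonempty ∧ ∀ s ∈ T, ∀ t : List Bool, t <+: s → t ∈ T

/-- A tree is pruned if every vertex has at least one child. -/
def IsPruned (T : Set (List Bool)) : Prop :=
  ∀ s ∈ T, s ++ [false] ∈ T ∨ s ++ [true] ∈ T

/-- The initial segment of length `n` of an infinite binary sequence. -/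
def pref (β : ℕ → Bool) (n : ℕ) : List Bool := List.ofFn (fun i : Fin n => β i)

/-- `β` is a branch of `T`: all its finite initial segments lie in `T`. -/
def IsBranch (T : Set (List Bool)) (β : ℕ → Bool) : Prop := ∀ n, pref β n ∈ T

/-- `β` contains infinitely many 1s. -/
def InfManyOnes (β : ℕ → Bool) : Prop := ∀ N, ∃ n ≥ N, β n = true

/-- A Σ-coloring of a binary tree `T`:
(Σ1) the root gets color ≥ 1;
(Σ2) if `f s = 1` then the right child `s⌢1` is in `T` with color ≥ 1;
(Σ3) if `f s ≥ 2` then the left child `s⌢0` is in `T` with color `f s - 1`. -/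
def SigmaColoring (T : Set (List Bool)) (f : List Bool → ℕ) : Prop :=
  1 ≤ f [] ∧
  (∀ s ∈ T, f s = 1 → s ++ [true] ∈ T ∧ 1 ≤ f (s ++ [true])) ∧
  (∀ s ∈ T, 2 ≤ f s → s ++ [false] ∈ T ∧ f (s ++ [false]) = f s - 1)

lemma pref_succ (β : ℕ → Bool) (n : ℕ) : pref β (n+1) = pref β n ++ [β n] := by
  rw [pref, List.ofFn_succ']
  simp [pref, List.concat_eq_append]

lemma pref_len (β : ℕ → Bool) (n : ℕ) : (pref β n).length = n := by
  simp [pref]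

theorem stmt2 (T : Set (List Bool)) (hT : IsSTTree T) (hP : IsPruned T) :
    (∃ f : List Bool → ℕ, SigmaColoring T f) ↔
      (∃ β : ℕ → Bool, IsBranch T β ∧ InfManyOnes β) := by
  constructor
  · rintro ⟨f, hf1, hf2, hf3⟩
    -- build the path
    let node : ℕ → List Bool := fun n => Nat.rec []
      (fun _ s => s ++ [decide (f s = 1)]) n
    have hnode : ∀ n, node (n+1) = node n ++ [decide (f (node n) = 1)] := fun n => rfl
    have hinv : ∀ n, node n ∈ T ∧ 1 ≤ f (node n) := by
      intro n
      induction n with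
      | zero =>
        refine ⟨?_, hf1⟩
        obtain ⟨s, hs⟩ := hT.1
        exact hT.2 s hs [] ⟨s, rfl⟩
      | succ n ih =>
        rw [hnode]
        rcases eq_or_lt_of_le ih.2 with h1 | h2
        · have := hf2 (node n) ih.1 h1.symm
          simp [h1.symm, this.1, this.2]
        · have h2' : 2 ≤ f (node n) := h2
          have := hf3 (node n) ih.1 h2'
          have hne : f (node n) ≠ 1 := by omega
          simp only [hne, decide_eq_true_eq, decide_false]
          exact ⟨this.1, by omega⟩
    refine ⟨fun n => decide (f (node n) = 1), ?_, ?_⟩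
    · have hpref : ∀ n, pref (fun n => decide (f (node n) = 1)) n = node n := by
        intro n
        induction n with
        | zero => rfl
        | succ n ih => rw [pref_succ, ih, hnode]
      intro n; rw [hpref]; exact (hinv n).1
    · intro N
      have key : ∀ j, j < f (node N) → f (node (N + j)) = f (node N) - j := by
        intro j
        induction j with
        | zero => simp
        | succ j ih =>
          intro hj
          have hj' := ih (by omega)
          have h2 : 2 ≤ f (node (N + j)) := by omega
          have := hf3 (node (N + j)) (hinv (N + j)).1 h2
          have hne : f (node (N + j)) ≠ 1 := by omega
          have hstep : f (node (N + j + 1)) = f (node (N + j)) - 1 := by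
            rw [hnode]
            simp only [hne, decide_eq_true_eq, decide_false]
            exact this.2
          have he : f (node (N + (j + 1))) = f (node (N + j + 1)) := rfl
          omega
      have hN1 := (hinv N).2
      refine ⟨N + (f (node N) - 1), by omega, ?_⟩
      have := key (f (node N) - 1) (by omega)
      simp only [decide_eq_true_eq]
      omega
  · rintro ⟨β, hβ, hinf⟩
    have hex : ∀ N : ℕ, ∃ n, N ≤ n ∧ β n = true := by
      intro N; obtain ⟨n, hn, h⟩ := hinf N; exact ⟨n, hn, h⟩
    let nxt : ℕ → ℕ := fun N => Nat.find (hex N)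
    have hnxt_ge : ∀ N, N ≤ nxt N := fun N => (Nat.find_spec (hex N)).1
    have hnxt_true : ∀ N, β (nxt N) = true := fun N => (Nat.find_spec (hex N)).2
    have hnxt_min : ∀ N m, N ≤ m → β m = true → nxt N ≤ m := by
      intro N m h1 h2; exact Nat.find_min' (hex N) ⟨h1, h2⟩
    refine ⟨fun s => if s = pref β s.length then nxt s.length - s.length + 1 else 0,
      ?_, ?_, ?_⟩
    · have h0 : ([] : List Bool) = pref β ([] : List Bool).length := rfl
      beta_reduce
      rw [if_pos h0]
      omega
    · intro s _ hs1
      beta_reduce at hs1 ⊢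
      by_cases h : s = pref β s.length
      · rw [if_pos h] at hs1
        have hge := hnxt_ge s.length
        have heq : nxt s.length = s.length := by omega
        have hβn : β s.length = true := heq ▸ hnxt_true s.length
        have hs' : s ++ [true] = pref β (s.length + 1) := by
          rw [pref_succ, hβn, ← h]
        have hlen : (s ++ [true]).length = s.length + 1 := by simp
        constructor
        · rw [hs']; exact hβ (s.length + 1)
        · rw [hlen, if_pos (hlen ▸ hs')]
          omega
      · rw [if_neg h] at hs1
        omega
    · intro s _ hs2
      beta_reduce at hs2 ⊢
      by_cases h : s = pref β s.length
      · rw [if_pos h] at hs2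
        have hge := hnxt_ge s.length
        have h1 : s.length + 1 ≤ nxt s.length := by omega
        have hβn : β s.length = false := by
          by_contra hc
          have hc' : β s.length = true := by simpa using hc
          have := hnxt_min s.length s.length le_rfl hc'
          omega
        have hs' : s ++ [false] = pref β (s.length + 1) := by
          rw [pref_succ, hβn, ← h]
        have hlen : (s ++ [false]).length = s.length + 1 := by simp
        have hnn : nxt (s.length + 1) = nxt s.length := by
          have a := hnxt_min (s.length + 1) (nxt s.length) h1 (hnxt_true s.length)
          have b := hnxt_min s.length (nxt (s.length + 1))
            (by have := hnxt_ge (s.length + 1); omega) (hnxt_true (s.length + 1))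
          omega
        constructor
        · rw [hs']; exact hβ (s.length + 1)
        · rw [hlen, if_pos (hlen ▸ hs'), if_pos h, hnn]
          omega
      · rw [if_neg h] at hs2
        omega
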